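/- Let G = (V, E) be a connected non-atomic finite simple graph, let {G_1, …, G_n} be a decomposition of G, let {K_1, …, K_k} be a decomposition of G_1 with k ≥ 2, and let v be a vertex of G_1 that belongs to none of G_2, …, G_n. Then: if v belongs to exactly one of the graphs K_1, …, K_k, say K_1, then G admits a decomposition of the form {K_1, L_1, …, L_m} with v ∉ L_i for every i; and if v belongs to two of the graphs K_1, …, K_k, then G admits a decomposition {L_1, L_2} into two subgraphs with v ∈ L_1 and v ∈ L_2. -/

import Mathlib

open SimpleGraph

/-- The "graph of a decomposition": the intersection graph of a family of subgraphs,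
where two distinct members are adjacent iff their vertex sets meet. -/
def decompGraph {V : Type*} {G : SimpleGraph V} {n : ℕ} (D : Fin n → G.Subgraph) :
    SimpleGraph (Fin n) where
  Adj i j := i ≠ j ∧ ((D i).verts ∩ (D j).verts).Nonempty
  symm := by
    constructor
    intro i j h
    exact ⟨h.1.symm, h.2.imp fun x hx => ⟨hx.2, hx.1⟩⟩
  loopless := ⟨fun i h => h.1 rfl⟩

/-- `D` is a decomposition of the subgraph `H` of `G`: a family of `n ≥ 2` connected
subgraphs of `H`, each containing at least one edge, pairwise sharing no edges and at
most one vertex, whose vertex sets and edge sets union to those of `H`, and whose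
intersection graph is a tree. -/
def IsDecompositionOf {V : Type*} {G : SimpleGraph V} (H : G.Subgraph) {n : ℕ}
    (D : Fin n → G.Subgraph) : Prop :=
  2 ≤ n ∧
  (∀ i, D i ≤ H) ∧
  (∀ i, (D i).Connected) ∧
  (∀ i, (D i).edgeSet.Nonempty) ∧
  (∀ i j, i ≠ j → (D i).edgeSet ∩ (D j).edgeSet = ∅) ∧
  (∀ i j, i ≠ j → ((D i).verts ∩ (D j).verts).Subsingleton) ∧
  (⋃ i, (D i).verts) = H.verts ∧
  (⋃ i, (D i).edgeSet) = H.edgeSet ∧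
  (decompGraph D).IsTree

/-- `D` is a decomposition of the graph `G` itself. -/
def IsDecomposition {V : Type*} (G : SimpleGraph V) {n : ℕ} (D : Fin n → G.Subgraph) : Prop :=
  IsDecompositionOf (⊤ : G.Subgraph) D

/-- A graph is atomic if it is connected, has at least one edge,
and admits no decomposition. -/
def IsAtomicGraph {V : Type*} (G : SimpleGraph V) : Prop :=
  G.Connected ∧ G.edgeSet.Nonempty ∧ ∀ (n : ℕ) (D : Fin n → G.Subgraph), ¬ IsDecomposition G D


namespace DecompRefine


variable {ι : Type*}

/-- The graph `T` with the vertex `r` cut off (made isolated). -/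
def away (T : SimpleGraph ι) (r : ι) : SimpleGraph ι where
  Adj x y := T.Adj x y ∧ x ≠ r ∧ y ≠ r
  symm := ⟨fun _ _ h => ⟨h.1.symm, h.2.2, h.2.1⟩⟩
  loopless := ⟨fun x h => T.loopless.irrefl x h.1⟩

lemma away_adj {T : SimpleGraph ι} {r x y : ι} :
    (away T r).Adj x y ↔ T.Adj x y ∧ x ≠ r ∧ y ≠ r := Iff.rfl

lemma away_le (T : SimpleGraph ι) (r : ι) : away T r ≤ T := by
  intro u v h
  exact h.1

lemma away_not_mem_support {T : SimpleGraph ι} {r : ι} :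
    ∀ {a b : ι} (p : (away T r).Walk a b), a ≠ r → r ∉ p.support
  | _, _, Walk.nil, ha => by simp [Ne.symm ha]
  | _, _, Walk.cons h q, ha => by
      simp only [Walk.support_cons, List.mem_cons, not_or]
      exact ⟨Ne.symm ha, away_not_mem_support q h.2.2⟩

lemma away_reachable_eq {T : SimpleGraph ι} {r x : ι}
    (h : (away T r).Reachable r x) : r = x := by
  obtain ⟨p⟩ := h
  cases p with
  | nil => rfl
  | cons h q => exact absurd rfl h.2.1

lemma away_reachable_unique {T : SimpleGraph ι} (hT : T.IsTree) {r u u' : ι}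
    (hu : T.Adj r u) (hu' : T.Adj r u') (h : (away T r).Reachable u u') : u = u' := by
  classical
  by_contra hne
  obtain ⟨W⟩ := h
  set P0 : (away T r).Walk u u' := ↑W.toPath with hP0def
  have hP0 : P0.IsPath := W.toPath.2
  have hrP0 : r ∉ P0.support := away_not_mem_support _ hu.ne'
  have hedges : ∀ e ∈ P0.edges, e ∈ T.edgeSet := fun e he =>
    (edgeSet_mono (away_le T r)) (Walk.edges_subset_edgeSet _ he)
  set P : T.Walk u u' := P0.transfer T hedges with hPdef
  have hP : P.IsPath := hP0.transfer hedges
  have hrP : r ∉ P.support := by rwa [hPdef, Walk.support_transfer]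
  have hq : (Walk.cons hu P).IsPath := hP.cons hrP
  have hcyc : (Walk.cons hu'.symm (Walk.cons hu P)).IsCycle := by
    rw [Walk.cons_isCycle_iff]
    refine ⟨hq, ?_⟩
    simp only [Walk.edges_cons, List.mem_cons, not_or]
    constructor
    · intro hsym
      rw [Sym2.eq_iff] at hsym
      rcases hsym with ⟨h1, h2⟩ | ⟨h1, _⟩
      · exact hu.ne' h2.symm
      · exact hne h1.symm
    · intro hmem
      exact hrP (P.snd_mem_support_of_mem_edges hmem)
  exact hT.IsAcyclic _ hcyc

lemma exists_away_nbr' {T : SimpleGraph ι} {r j s : ι} (p : T.Walk j s) (hs : s = r)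
    (hj : j ≠ r) : ∃ u, T.Adj r u ∧ (away T r).Reachable j u := by
  induction p with
  | nil => exact absurd hs hj
  | @cons a c b h q ih =>
      subst hs
      by_cases hc : c = b
      · subst hc
        exact ⟨a, h.symm, Reachable.refl _⟩
      · obtain ⟨u, h1, h2⟩ := ih rfl hc
        exact ⟨u, h1, (Adj.reachable (away_adj.mpr ⟨h, hj, hc⟩)).trans h2⟩

lemma exists_away_nbr {T : SimpleGraph ι} {r j : ι} (p : T.Walk j r) :
    j ≠ r → ∃ u, T.Adj r u ∧ (away T r).Reachable j u :=
  exists_away_nbr' p rfl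

open Classical in
/-- For `j ≠ r`, the neighbour of `r` whose branch (component of `T - r`) contains `j`. -/
noncomputable def nbr (T : SimpleGraph ι) (r j : ι) : ι :=
  if h : ∃ u, T.Adj r u ∧ (away T r).Reachable j u then h.choose else r

lemma nbr_spec {T : SimpleGraph ι} (hT : T.Connected) {r j : ι} (hj : j ≠ r) :
    T.Adj r (nbr T r j) ∧ (away T r).Reachable j (nbr T r j) := by
  obtain ⟨p⟩ := hT.preconnected j r
  have h : ∃ u, T.Adj r u ∧ (away T r).Reachable j u := exists_away_nbr p hj
  unfold nbr
  rw [dif_pos h]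
  exact h.choose_spec

lemma nbr_eq {T : SimpleGraph ι} (hT : T.IsTree) {r j u : ι}
    (hu : T.Adj r u) (hr : (away T r).Reachable j u) : nbr T r j = u := by
  have h : ∃ u, T.Adj r u ∧ (away T r).Reachable j u := ⟨u, hu, hr⟩
  unfold nbr
  rw [dif_pos h]
  exact away_reachable_unique hT h.choose_spec.1 hu (h.choose_spec.2.symm.trans hr)

lemma nbr_adj_self {T : SimpleGraph ι} (hT : T.IsTree) {r j : ι} (h : T.Adj r j) :
    nbr T r j = j := nbr_eq hT h (Reachable.refl _)

lemma nbr_adj {T : SimpleGraph ι} (hT : T.IsTree) {r j : ι} (hj : j ≠ r) :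
    T.Adj r (nbr T r j) := (nbr_spec hT.isConnected hj).1

lemma nbr_reach {T : SimpleGraph ι} (hT : T.IsTree) {r j : ι} (hj : j ≠ r) :
    (away T r).Reachable j (nbr T r j) := (nbr_spec hT.isConnected hj).2

lemma nbr_crux {T : SimpleGraph ι} (hT : T.IsTree) {r j j' : ι}
    (hjj' : T.Adj j j') (hj : j ≠ r) (hj' : j' ≠ r) : nbr T r j = nbr T r j' := by
  have h := nbr_spec hT.isConnected hj'
  exact nbr_eq hT h.1 ((Adj.reachable (away_adj.mpr ⟨hjj', hj, hj'⟩)).trans h.2)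

lemma nbr_congr {T : SimpleGraph ι} (hT : T.IsTree) {r j j' : ι}
    (h : (away T r).Reachable j j') (hj' : j' ≠ r) : nbr T r j = nbr T r j' := by
  have h2 := nbr_spec hT.isConnected hj'
  exact nbr_eq hT h2.1 (h.trans h2.2)

lemma exists_first_hit' {T : SimpleGraph ι} {r r' y s : ι} (p : (away T r').Walk y s)
    (hs : s = r) (hy : y ≠ r) :
    ∃ z, T.Adj z r ∧ z ≠ r' ∧ (away T r).Reachable y z := by
  induction p with
  | nil => exact absurd hs hy
  | @cons a c b h q ih =>
      subst hs
      by_cases hc : c = b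
      · subst hc
        exact ⟨a, h.1, h.2.1, Reachable.refl _⟩
      · obtain ⟨z, h1, h2, h3⟩ := ih rfl hc
        exact ⟨z, h1, h2, (Adj.reachable (away_adj.mpr ⟨h.1, hy, hc⟩)).trans h3⟩

lemma exists_first_hit {T : SimpleGraph ι} {r r' y : ι} (p : (away T r').Walk y r) :
    y ≠ r → ∃ z, T.Adj z r ∧ z ≠ r' ∧ (away T r).Reachable y z :=
  fun hy => exists_first_hit' p rfl hy

lemma away_swap {T : SimpleGraph ι} {r r' a b : ι} (p : (away T r).Walk a b) :
    r' ∉ p.support → (away T r').Reachable a b := by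
  induction p with
  | nil => exact fun _ => Reachable.refl _
  | @cons x c y h q ih =>
      intro hns
      rw [Walk.support_cons, List.mem_cons] at hns
      push_neg at hns
      have hc : c ≠ r' := fun hc => hns.2 (hc ▸ Walk.start_mem_support q)
      exact (Adj.reachable (away_adj.mpr ⟨h.1, Ne.symm hns.1, hc⟩)).trans (ih hns.2)

lemma not_both_sides {T : SimpleGraph ι} (hT : T.IsTree) {r r' y : ι} (hrr' : T.Adj r r')
    (h1 : (away T r).Reachable y r') (h2 : (away T r').Reachable y r) : False := by
  have hy : y ≠ r := by
    rintro rfl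
    exact hrr'.ne (away_reachable_eq h1)
  obtain ⟨p⟩ := h2
  obtain ⟨z, hz1, hz2, hz3⟩ := exists_first_hit p hy
  have e1 : nbr T r y = r' := nbr_eq hT hrr' h1
  have e2 : nbr T r y = z := nbr_eq hT hz1.symm hz3
  exact hz2 (e2.symm.trans e1)


lemma connected_iSup {V : Type*} {G : SimpleGraph V} {α : Type*} (F : α → G.Subgraph)
    (hF : ∀ a, (F a).Connected) (a₀ : α)
    (h : ∀ a, Relation.ReflTransGen
      (fun a b => ((F a).verts ∩ (F b).verts).Nonempty) a a₀) :
    (⨆ a, F a).Connected := by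
  have hle : ∀ a, F a ≤ ⨆ a, F a := fun a => le_iSup F a
  obtain ⟨y₀, hy₀⟩ := (hF a₀).nonempty
  have key : ∀ a, ∀ x, ∀ hx : x ∈ (F a).verts,
      (⨆ a, F a).coe.Reachable ⟨x, (hle a).1 hx⟩ ⟨y₀, (hle a₀).1 hy₀⟩ := by
    intro a
    induction h a using Relation.ReflTransGen.head_induction_on with
    | refl =>
        intro x hx
        exact Reachable.map (Subgraph.inclusion (hle a₀)) ((hF a₀) ⟨x, hx⟩ ⟨y₀, hy₀⟩)
    | head h' htail ih =>
        rename_i p q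
        intro x hx
        obtain ⟨z, hz1, hz2⟩ := h'
        refine Reachable.trans ?_ (ih z hz2)
        exact Reachable.map (Subgraph.inclusion (hle p)) ((hF p) ⟨x, hx⟩ ⟨z, hz1⟩)
  rw [Subgraph.connected_iff]
  constructor
  · constructor
    rintro ⟨x, hx⟩ ⟨y, hy⟩
    rw [Subgraph.verts_iSup, Set.mem_iUnion] at hx hy
    obtain ⟨a, ha⟩ := hx
    obtain ⟨b, hb⟩ := hy
    exact (key a x ha).trans (key b y hb).symm
  · exact ⟨y₀, (hle a₀).1 hy₀⟩


lemma star_cycle_aux {n : ℕ} {S : SimpleGraph (Fin (n+1))}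
    (hadj : ∀ i j, S.Adj i j → (i = 0 ∨ j = 0)) (c : S.Walk 0 0) : ¬ c.IsCycle := by
  intro hc
  cases c with
  | nil => exact hc.ne_nil rfl
  | @cons _ b _ h p =>
    cases p with
    | nil => exact S.loopless.irrefl 0 h
    | @cons _ z _ h2 q =>
      have hb : b ≠ 0 := h.ne'
      have hz : z = 0 := (hadj b z h2).resolve_left hb
      subst hz
      cases q with
      | nil =>
          have h3 := hc.three_le_length
          simp [Walk.length_cons] at h3
      | @cons _ w _ h3 q' =>
          have hnd := hc.support_nodup
          simp only [Walk.support_cons, List.tail_cons, List.nodup_cons] at hnd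
          have h0q : (0 : Fin (n+1)) ∈ q'.support := Walk.end_mem_support q'
          exact absurd h0q hnd.2.1

lemma isTree_star {n : ℕ} (S : SimpleGraph (Fin (n+1)))
    (hadj : ∀ i j, S.Adj i j ↔ i ≠ j ∧ (i = 0 ∨ j = 0)) : S.IsTree := by
  constructor
  · rw [connected_iff_exists_forall_reachable]
    refine ⟨0, fun w => ?_⟩
    rcases eq_or_ne w 0 with rfl | hw
    · exact Reachable.refl _
    · exact Adj.reachable ((hadj 0 w).mpr ⟨Ne.symm hw, Or.inl rfl⟩)
  · intro a c hc
    have h0 : (0 : Fin (n+1)) ∈ c.support := by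
      cases c with
      | nil => exact absurd rfl hc.ne_nil
      | @cons _ b _ h q =>
        rcases ((hadj _ _).mp h).2 with h' | h'
        · rw [← h']; exact Walk.start_mem_support _
        · rw [Walk.support_cons]
          exact List.mem_cons_of_mem _ (h' ▸ Walk.start_mem_support q)
    exact star_cycle_aux (fun i j h => ((hadj i j).mp h).2) (c.rotate 0 h0) (hc.rotate h0)

lemma isTree_two (S : SimpleGraph (Fin 2)) (h01 : S.Adj 0 1) : S.IsTree := by
  constructor
  · rw [connected_iff_exists_forall_reachable]
    refine ⟨0, fun w => ?_⟩
    fin_cases w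
    · exact Reachable.refl _
    · exact h01.reachable
  · intro a c hc
    have h3 := hc.three_le_length
    have hnd := hc.support_nodup
    have hlen : c.support.tail.length = c.length := by
      rw [List.length_tail, Walk.length_support]
      omega
    have hcard := List.Nodup.length_le_card hnd
    simp only [Fintype.card_fin] at hcard
    omega


section Parts

variable {V : Type*} {G : SimpleGraph V} {α β : Type*}

/-- Grouping a family of subgraphs by labels. -/
noncomputable def PartOf (P : α → G.Subgraph) (lab : α → Option β) (b : β) : G.Subgraph :=
  ⨆ a : {a // lab a = some b}, P a.1

lemma mem_PartOf_verts {P : α → G.Subgraph} {lab : α → Option β} {b : β} {x : V} :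
    x ∈ (PartOf P lab b).verts ↔ ∃ a, lab a = some b ∧ x ∈ (P a).verts := by
  simp only [PartOf, Subgraph.verts_iSup, Set.mem_iUnion, Subtype.exists]
  tauto

lemma mem_PartOf_edgeSet {P : α → G.Subgraph} {lab : α → Option β} {b : β} {e : Sym2 V} :
    e ∈ (PartOf P lab b).edgeSet ↔ ∃ a, lab a = some b ∧ e ∈ (P a).edgeSet := by
  simp only [PartOf, Subgraph.edgeSet_iSup, Set.mem_iUnion, Subtype.exists]
  tauto

lemma le_PartOf {P : α → G.Subgraph} {lab : α → Option β} {b : β} {a : α}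
    (h : lab a = some b) : P a ≤ PartOf P lab b :=
  le_iSup (fun aa : {a // lab a = some b} => P aa.1) ⟨a, h⟩

lemma PartOf_inter_subset {P : α → G.Subgraph} {lab : α → Option β} {b b' : β} {W : Set V}
    (h : ∀ a a', lab a = some b → lab a' = some b' →
      ∀ x, x ∈ (P a).verts → x ∈ (P a').verts → x ∈ W) :
    (PartOf P lab b).verts ∩ (PartOf P lab b').verts ⊆ W := by
  rintro x ⟨hx1, hx2⟩
  rw [mem_PartOf_verts] at hx1 hx2
  obtain ⟨a, ha, hxa⟩ := hx1
  obtain ⟨a', ha', hxa'⟩ := hx2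
  exact h a a' ha ha' x hxa hxa'

lemma PartOf_edge_inter_empty {P : α → G.Subgraph} {lab : α → Option β} {b b' : β}
    (h : ∀ a a', lab a = some b → lab a' = some b' →
      (P a).edgeSet ∩ (P a').edgeSet = ∅) :
    (PartOf P lab b).edgeSet ∩ (PartOf P lab b').edgeSet = ∅ := by
  ext e
  simp only [Set.mem_inter_iff, Set.mem_empty_iff_false, iff_false, not_and]
  intro h1 h2
  rw [mem_PartOf_edgeSet] at h1 h2
  obtain ⟨a, ha, hea⟩ := h1
  obtain ⟨a', ha', hea'⟩ := h2
  have := h a a' ha ha'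
  exact absurd (Set.mem_inter hea hea') (by rw [this]; exact id)

lemma inter_PartOf_subset_left {P : α → G.Subgraph} {lab : α → Option β} {b : β}
    {H : G.Subgraph} {W : Set V}
    (h : ∀ a, lab a = some b → ∀ x, x ∈ H.verts → x ∈ (P a).verts → x ∈ W) :
    H.verts ∩ (PartOf P lab b).verts ⊆ W := by
  rintro x ⟨hx1, hx2⟩
  rw [mem_PartOf_verts] at hx2
  obtain ⟨a, ha, hxa⟩ := hx2
  exact h a ha x hx1 hxa

lemma edge_inter_PartOf_left {P : α → G.Subgraph} {lab : α → Option β} {b : β}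
    {H : G.Subgraph}
    (h : ∀ a, lab a = some b → H.edgeSet ∩ (P a).edgeSet = ∅) :
    H.edgeSet ∩ (PartOf P lab b).edgeSet = ∅ := by
  ext e
  simp only [Set.mem_inter_iff, Set.mem_empty_iff_false, iff_false, not_and]
  intro h1 h2
  rw [mem_PartOf_edgeSet] at h2
  obtain ⟨a, ha, hea⟩ := h2
  exact absurd (Set.mem_inter h1 hea) (by rw [h a ha]; exact id)

end Parts

lemma rtg_of_walk {ι σ : Type*} {A : SimpleGraph ι} {rel : σ → σ → Prop}
    {Good : ι → Prop} (F : ∀ x, Good x → σ)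
    (hclose : ∀ ⦃x y⦄, A.Adj x y → Good x → Good y)
    (hstep : ∀ ⦃x y⦄ (_ : A.Adj x y) (hx : Good x) (hy : Good y), rel (F x hx) (F y hy)) :
    ∀ {x y : ι} (_ : A.Walk x y) (hx : Good x) (hy : Good y),
      Relation.ReflTransGen rel (F x hx) (F y hy) := by
  intro x y p
  induction p with
  | nil => intro hx hy; exact Relation.ReflTransGen.refl
  | @cons a c b h q ih =>
      intro hx hy
      have hc := hclose h hx
      exact Relation.ReflTransGen.head (hstep h hx hc) (ih hc hy)


section Case1

open Classical

variable {V : Type*} {G : SimpleGraph V} {m k : ℕ}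
variable (K : Fin k → G.Subgraph) (D : Fin m → G.Subgraph)
  (i₀ : Fin m) (j₀ : Fin k) (X : Fin m → V)

/-- Labels for the star decomposition around `K j₀`. -/
def Beta1 : Type _ :=
  {u : Fin k // (decompGraph K).Adj j₀ u} ⊕
  {w : Fin m // (decompGraph D).Adj i₀ w ∧ ∀ j, X w ∈ (K j).verts → j = j₀}

noncomputable instance : Fintype (Beta1 K D i₀ j₀ X) := by
  unfold Beta1; exact Fintype.ofFinite _

noncomputable def mkI (u : Fin k) : Option (Beta1 K D i₀ j₀ X) :=
  if h : (decompGraph K).Adj j₀ u then some (Sum.inl ⟨u, h⟩) else none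

noncomputable def mkR (w : Fin m) : Option (Beta1 K D i₀ j₀ X) :=
  if h : (decompGraph D).Adj i₀ w ∧ ∀ j, X w ∈ (K j).verts → j = j₀ then
    some (Sum.inr ⟨w, h⟩) else none

noncomputable def labD1 (w : Fin m) : Option (Beta1 K D i₀ j₀ X) :=
  if h2 : ∃ j, j ≠ j₀ ∧ X w ∈ (K j).verts then
    mkI K D i₀ j₀ X (nbr (decompGraph K) j₀ h2.choose) else mkR K D i₀ j₀ X w

noncomputable def lab1 : Fin k ⊕ Fin m → Option (Beta1 K D i₀ j₀ X)
  | .inl j => if j = j₀ then none else mkI K D i₀ j₀ X (nbr (decompGraph K) j₀ j)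
  | .inr i => if i = i₀ then none else labD1 K D i₀ j₀ X (nbr (decompGraph D) i₀ i)

/-- fine family -/
def fineP : Fin k ⊕ Fin m → G.Subgraph := Sum.elim K D

/-- the subsingleton target sets for intersections with `K j₀` -/
def W1 : Beta1 K D i₀ j₀ X → Set V
  | .inl u => (K j₀).verts ∩ (K u.1).verts
  | .inr w => (D i₀).verts ∩ (D w.1).verts

variable {K D i₀ j₀ X}

lemma mkI_pos {u : Fin k} (h : (decompGraph K).Adj j₀ u) :
    mkI K D i₀ j₀ X u = some (Sum.inl ⟨u, h⟩) := dif_pos h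

lemma mkI_some {u : Fin k} {b : Beta1 K D i₀ j₀ X} (h : mkI K D i₀ j₀ X u = some b) :
    ∃ h' : (decompGraph K).Adj j₀ u, b = Sum.inl ⟨u, h'⟩ := by
  by_cases h' : (decompGraph K).Adj j₀ u
  · rw [mkI, dif_pos h'] at h
    exact ⟨h', (Option.some_injective _ h).symm⟩
  · rw [mkI, dif_neg h'] at h
    exact absurd h (by simp)

lemma mkR_pos {w : Fin m}
    (h : (decompGraph D).Adj i₀ w ∧ ∀ j, X w ∈ (K j).verts → j = j₀) :
    mkR K D i₀ j₀ X w = some (Sum.inr ⟨w, h⟩) := dif_pos h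

lemma mkR_some {w : Fin m} {b : Beta1 K D i₀ j₀ X} (h : mkR K D i₀ j₀ X w = some b) :
    ∃ h' : (decompGraph D).Adj i₀ w ∧ ∀ j, X w ∈ (K j).verts → j = j₀,
      b = Sum.inr ⟨w, h'⟩ := by
  by_cases h' : (decompGraph D).Adj i₀ w ∧ ∀ j, X w ∈ (K j).verts → j = j₀
  · rw [mkR, dif_pos h'] at h
    exact ⟨h', (Option.some_injective _ h).symm⟩
  · rw [mkR, dif_neg h'] at h
    exact absurd h (by simp)

lemma lab1_inl {j : Fin k} (hj : j ≠ j₀) :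
    lab1 K D i₀ j₀ X (.inl j) = mkI K D i₀ j₀ X (nbr (decompGraph K) j₀ j) := by
  simp [lab1, hj]

lemma lab1_inr {i : Fin m} (hi : i ≠ i₀) :
    lab1 K D i₀ j₀ X (.inr i) = labD1 K D i₀ j₀ X (nbr (decompGraph D) i₀ i) := by
  simp [lab1, hi]

lemma lab1_inl_ne {j : Fin k} {b} (h : lab1 K D i₀ j₀ X (.inl j) = some b) : j ≠ j₀ := by
  intro hj
  rw [lab1, if_pos hj] at h
  exact absurd h (by simp)

lemma lab1_inr_ne {i : Fin m} {b} (h : lab1 K D i₀ j₀ X (.inr i) = some b) : i ≠ i₀ := by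
  intro hi
  rw [lab1, if_pos hi] at h
  exact absurd h (by simp)


section Facts

variable (hKtree : (decompGraph K).IsTree) (hDtree : (decompGraph D).IsTree)
  (hKle : ∀ j, K j ≤ D i₀)
  (hKss : ∀ j j', j ≠ j' → ((K j).verts ∩ (K j').verts).Subsingleton)
  (hDss : ∀ i i', i ≠ i' → ((D i).verts ∩ (D i').verts).Subsingleton)
  (hX : ∀ w, (decompGraph D).Adj i₀ w → X w ∈ (D i₀).verts ∩ (D w).verts)

lemma decompGraph_adj {n : ℕ} {F : Fin n → G.Subgraph} {i j : Fin n} :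
    (decompGraph F).Adj i j ↔ i ≠ j ∧ ((F i).verts ∩ (F j).verts).Nonempty := Iff.rfl

include hKle hDss hX in
lemma branch_id {x : V} {j : Fin k} {i : Fin m} (hxK : x ∈ (K j).verts)
    (hxD : x ∈ (D i).verts) (hi : i ≠ i₀) :
    (decompGraph D).Adj i₀ i ∧ x = X i := by
  have hx0 : x ∈ (D i₀).verts := (hKle j).1 hxK
  have hadj : (decompGraph D).Adj i₀ i := ⟨Ne.symm hi, x, hx0, hxD⟩
  exact ⟨hadj, hDss i₀ i (Ne.symm hi) ⟨hx0, hxD⟩ (hX i hadj)⟩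

include hKtree hDtree hKle hDss hX in
lemma lab1_eq_mix {j : Fin k} {i : Fin m} {b b' : Beta1 K D i₀ j₀ X}
    (hj : lab1 K D i₀ j₀ X (.inl j) = some b) (hi : lab1 K D i₀ j₀ X (.inr i) = some b')
    (hne : (((K j).verts) ∩ ((D i).verts)).Nonempty) : b = b' := by
  obtain ⟨x, hxK, hxD⟩ := hne
  have hjne := lab1_inl_ne hj
  have hine := lab1_inr_ne hi
  obtain ⟨hadj, hxX⟩ := branch_id hKle hDss hX hxK hxD hine
  rw [lab1_inl hjne] at hj
  rw [lab1_inr hine, nbr_adj_self hDtree hadj] at hi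
  have h2 : ∃ j'', j'' ≠ j₀ ∧ X i ∈ (K j'').verts := ⟨j, hjne, hxX ▸ hxK⟩
  rw [labD1, dif_pos h2] at hi
  obtain ⟨hjc, hjcm⟩ := h2.choose_spec
  by_cases hc : h2.choose = j
  · rw [hc] at hi
    exact Option.some_injective _ (hj.symm.trans hi)
  · have hadjK : (decompGraph K).Adj j h2.choose :=
      ⟨Ne.symm hc, X i, hxX ▸ hxK, hjcm⟩
    rw [← nbr_crux hKtree hadjK hjne hjc] at hi
    exact Option.some_injective _ (hj.symm.trans hi)

include hKtree hDtree hKle hDss hX in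
lemma lab1_eq_of_inter {a a' : Fin k ⊕ Fin m} {b b' : Beta1 K D i₀ j₀ X}
    (ha : lab1 K D i₀ j₀ X a = some b) (ha' : lab1 K D i₀ j₀ X a' = some b')
    (hne : ((fineP K D a).verts ∩ (fineP K D a').verts).Nonempty) : b = b' := by
  obtain j | i := a <;> obtain j' | i' := a'
  ·
      by_cases hjj : j = j'
      · subst hjj
        exact Option.some_injective _ (ha.symm.trans ha')
      · have hj := lab1_inl_ne ha
        have hj' := lab1_inl_ne ha'
        have hadj : (decompGraph K).Adj j j' := ⟨hjj, hne⟩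
        rw [lab1_inl hj] at ha
        rw [lab1_inl hj', ← nbr_crux hKtree hadj hj hj'] at ha'
        exact Option.some_injective _ (ha.symm.trans ha')
  · exact lab1_eq_mix hKtree hDtree hKle hDss hX ha ha' hne
  · exact (lab1_eq_mix hKtree hDtree hKle hDss hX ha' ha
        (by rwa [Set.inter_comm] at hne)).symm
  · by_cases hii : i = i'
    · subst hii
      exact Option.some_injective _ (ha.symm.trans ha')
    · have hi := lab1_inr_ne ha
      have hi' := lab1_inr_ne ha'
      have hadj : (decompGraph D).Adj i i' := ⟨hii, hne⟩
      rw [lab1_inr hi] at ha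
      rw [lab1_inr hi', ← nbr_crux hDtree hadj hi hi'] at ha'
      exact Option.some_injective _ (ha.symm.trans ha')

include hKtree hDtree hKle hDss hX in
lemma inter_j0_subset {a : Fin k ⊕ Fin m} {b : Beta1 K D i₀ j₀ X}
    (ha : lab1 K D i₀ j₀ X a = some b) {x : V} (hx0 : x ∈ (K j₀).verts)
    (hxa : x ∈ (fineP K D a).verts) : x ∈ W1 K D i₀ j₀ X b := by
  obtain j | i := a
  · have hj := lab1_inl_ne ha
    have hadj : (decompGraph K).Adj j₀ j := ⟨Ne.symm hj, x, hx0, hxa⟩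
    rw [lab1_inl hj, nbr_adj_self hKtree hadj, mkI_pos hadj] at ha
    have hb := Option.some_injective _ ha
    rw [← hb]
    exact ⟨hx0, hxa⟩
  · have hi := lab1_inr_ne ha
    obtain ⟨hadj, hxX⟩ := branch_id hKle hDss hX hx0 hxa hi
    rw [lab1_inr hi, nbr_adj_self hDtree hadj, labD1] at ha
    by_cases h2 : ∃ j'', j'' ≠ j₀ ∧ X i ∈ (K j'').verts
    · rw [dif_pos h2] at ha
      obtain ⟨hjc, hjcm⟩ := h2.choose_spec
      have hadjK : (decompGraph K).Adj j₀ h2.choose :=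
        ⟨Ne.symm hjc, X i, hxX ▸ hx0, hjcm⟩
      rw [nbr_adj_self hKtree hadjK, mkI_pos hadjK] at ha
      have hb := Option.some_injective _ ha
      rw [← hb]
      exact ⟨hx0, hxX ▸ hjcm⟩
    · rw [dif_neg h2] at ha
      obtain ⟨h', hb⟩ := mkR_some ha
      rw [hb]
      exact ⟨(hKle j₀).1 hx0, hxa⟩

include hKtree in
lemma lab1_can_inl {u : Fin k} (hu : (decompGraph K).Adj j₀ u) :
    lab1 K D i₀ j₀ X (.inl u) = some (Sum.inl ⟨u, hu⟩) := by
  rw [lab1_inl hu.ne', nbr_adj_self hKtree hu, mkI_pos hu]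

include hDtree in
lemma lab1_can_inr {w : Fin m}
    (hw : (decompGraph D).Adj i₀ w ∧ ∀ j, X w ∈ (K j).verts → j = j₀) :
    lab1 K D i₀ j₀ X (.inr w) = some (Sum.inr ⟨w, hw⟩) := by
  rw [lab1_inr hw.1.ne', nbr_adj_self hDtree hw.1, labD1, dif_neg, mkR_pos hw]
  rintro ⟨j, hj, hmem⟩
  exact hj (hw.2 j hmem)

include hKtree in
lemma act_inl {j : Fin k} (hj : j ≠ j₀) : ∃ b, lab1 K D i₀ j₀ X (.inl j) = some b :=
  ⟨_, (lab1_inl hj).trans (mkI_pos (nbr_adj hKtree hj))⟩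

include hKtree hDtree in
lemma act_inr {i : Fin m} (hi : i ≠ i₀) : ∃ b, lab1 K D i₀ j₀ X (.inr i) = some b := by
  rw [lab1_inr hi]
  set w := nbr (decompGraph D) i₀ i with hw
  have hadjw : (decompGraph D).Adj i₀ w := nbr_adj hDtree hi
  rw [labD1]
  by_cases h2 : ∃ j'', j'' ≠ j₀ ∧ X w ∈ (K j'').verts
  · rw [dif_pos h2]
    exact ⟨_, mkI_pos (nbr_adj hKtree h2.choose_spec.1)⟩
  · rw [dif_neg h2]
    refine ⟨_, mkR_pos ⟨hadjw, fun j hmem => ?_⟩⟩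
    by_contra hne
    exact h2 ⟨j, hne, hmem⟩

include hKtree hDtree in
lemma lab1_surj (b : Beta1 K D i₀ j₀ X) : ∃ a, lab1 K D i₀ j₀ X a = some b := by
  obtain ⟨u, hu⟩ | ⟨w, hw⟩ := b
  exacts [⟨.inl u, lab1_can_inl hKtree hu⟩, ⟨.inr w, lab1_can_inr hDtree hw⟩]

include hKtree hDtree hX in
lemma inter_j0_nonempty (hKv : (⋃ j, (K j).verts) = (D i₀).verts)
    (b : Beta1 K D i₀ j₀ X) :
    ((K j₀).verts ∩ (PartOf (fineP K D) (lab1 K D i₀ j₀ X) b).verts).Nonempty := by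
  obtain ⟨u, hu⟩ | ⟨w, hw⟩ := b
  · obtain ⟨x, hx⟩ := hu.2
    exact ⟨x, hx.1, mem_PartOf_verts.mpr ⟨.inl u, lab1_can_inl hKtree hu, hx.2⟩⟩
  · have hXw := hX w hw.1
    have hmem : X w ∈ (K j₀).verts := by
      have h1 : X w ∈ ⋃ j, (K j).verts := hKv ▸ hXw.1
      rw [Set.mem_iUnion] at h1
      obtain ⟨j, hj⟩ := h1
      rwa [hw.2 j hj] at hj
    exact ⟨X w, hmem, mem_PartOf_verts.mpr ⟨.inr w, lab1_can_inr hDtree hw, hXw.2⟩⟩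

include hKle in
lemma hKD_edge (hDed : ∀ i i', i ≠ i' → (D i).edgeSet ∩ (D i').edgeSet = ∅)
    (j : Fin k) {i : Fin m} (hi : i ≠ i₀) : (K j).edgeSet ∩ (D i).edgeSet = ∅ := by
  rw [Set.eq_empty_iff_forall_notMem]
  rintro e ⟨he1, he2⟩
  have h1 : e ∈ (D i₀).edgeSet := Subgraph.edgeSet_mono (hKle j) he1
  have := hDed i₀ i (Ne.symm hi)
  rw [Set.eq_empty_iff_forall_notMem] at this
  exact this e ⟨h1, he2⟩

include hKtree hDtree hKle hDss hX in
lemma lab1_edge_disj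
    (hKed : ∀ j j', j ≠ j' → (K j).edgeSet ∩ (K j').edgeSet = ∅)
    (hDed : ∀ i i', i ≠ i' → (D i).edgeSet ∩ (D i').edgeSet = ∅)
    {a a' : Fin k ⊕ Fin m} {b b' : Beta1 K D i₀ j₀ X}
    (ha : lab1 K D i₀ j₀ X a = some b) (ha' : lab1 K D i₀ j₀ X a' = some b')
    (hbb : b ≠ b') : (fineP K D a).edgeSet ∩ (fineP K D a').edgeSet = ∅ := by
  obtain j | i := a <;> obtain j' | i' := a'
  · refine hKed j j' fun hjj => hbb ?_
    subst hjj
    exact Option.some_injective _ (ha.symm.trans ha')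
  · exact hKD_edge hKle hDed j (lab1_inr_ne ha')
  · rw [Set.inter_comm]
    exact hKD_edge hKle hDed j' (lab1_inr_ne ha)
  · refine hDed i i' fun hii => hbb ?_
    subst hii
    exact Option.some_injective _ (ha.symm.trans ha')

include hKtree hDtree hX in
lemma Part1_connected (hKconn : ∀ j, (K j).Connected) (hDconn : ∀ i, (D i).Connected)
    (b : Beta1 K D i₀ j₀ X) :
    (PartOf (fineP K D) (lab1 K D i₀ j₀ X) b).Connected := by
  classical
  set lab := lab1 K D i₀ j₀ X with hlabdef
  set P := fineP K D with hPdef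
  set σ := {a : Fin k ⊕ Fin m // lab a = some b} with hσdef
  set rel : σ → σ → Prop :=
    fun aa bb => ((P aa.1).verts ∩ (P bb.1).verts).Nonempty with hreldef
  have hF : ∀ aa : σ, (P aa.1).Connected := by
    rintro ⟨j | i, h⟩
    exacts [hKconn j, hDconn i]
  -- the two walk-transfer principles
  have hcloseK : ∀ ⦃x y : Fin k⦄, (away (decompGraph K) j₀).Adj x y →
      lab (.inl x) = some b → lab (.inl y) = some b := by
    intro x y hxy hx
    rw [hlabdef, lab1_inl hxy.2.2, ← nbr_crux hKtree hxy.1 hxy.2.1 hxy.2.2]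
    rw [hlabdef, lab1_inl hxy.2.1] at hx
    exact hx
  have hstepK : ∀ ⦃x y : Fin k⦄, (away (decompGraph K) j₀).Adj x y →
      ∀ (hx : lab (.inl x) = some b) (hy : lab (.inl y) = some b),
      rel ⟨.inl x, hx⟩ ⟨.inl y, hy⟩ := fun x y hxy _ _ => hxy.1.2
  have hcloseD : ∀ ⦃x y : Fin m⦄, (away (decompGraph D) i₀).Adj x y →
      lab (.inr x) = some b → lab (.inr y) = some b := by
    intro x y hxy hx
    rw [hlabdef, lab1_inr hxy.2.2, ← nbr_crux hDtree hxy.1 hxy.2.1 hxy.2.2]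
    rw [hlabdef, lab1_inr hxy.2.1] at hx
    exact hx
  have hstepD : ∀ ⦃x y : Fin m⦄, (away (decompGraph D) i₀).Adj x y →
      ∀ (hx : lab (.inr x) = some b) (hy : lab (.inr y) = some b),
      rel ⟨.inr x, hx⟩ ⟨.inr y, hy⟩ := fun x y hxy _ _ => hxy.1.2
  -- case split on b
  obtain ⟨u, hu⟩ | ⟨w, hw⟩ := b
  · -- star piece around K u
    have hua : lab (.inl u) = some (Sum.inl ⟨u, hu⟩) := lab1_can_inl hKtree hu
    have kclaim : ∀ (j : Fin k) (hj : lab (.inl j) = some (Sum.inl ⟨u, hu⟩)),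
        Relation.ReflTransGen rel ⟨.inl j, hj⟩ ⟨.inl u, hua⟩ := by
      intro j hj
      have hjne : j ≠ j₀ := lab1_inl_ne hj
      have hnbr : nbr (decompGraph K) j₀ j = u := by
        have h1 := hj
        rw [hlabdef, lab1_inl hjne] at h1
        obtain ⟨h', heq⟩ := mkI_some h1
        exact (congrArg Subtype.val (Sum.inl_injective heq)).symm
      have hreach := nbr_reach hKtree hjne
      rw [hnbr] at hreach
      obtain ⟨p⟩ := hreach
      exact rtg_of_walk (fun x h => (⟨.inl x, h⟩ : σ)) hcloseK hstepK p hj hua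
    apply connected_iSup (fun aa : σ => P aa.1) hF ⟨.inl u, hua⟩
    rintro ⟨j | i, h⟩
    · exact kclaim j h
    · -- branch: first walk inside the branch to its root w', then jump to K side
      have hine : i ≠ i₀ := lab1_inr_ne h
      have hadjw : (decompGraph D).Adj i₀ (nbr (decompGraph D) i₀ i) := nbr_adj hDtree hine
      set w' := nbr (decompGraph D) i₀ i with hw'def
      have hlabw' : lab (.inr w') = some (Sum.inl ⟨u, hu⟩) := by
        rw [hlabdef, lab1_inr hadjw.ne', nbr_adj_self hDtree hadjw]
        rw [hlabdef, lab1_inr hine] at h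
        exact h
      have h1 : labD1 K D i₀ j₀ X w' = some (Sum.inl ⟨u, hu⟩) := by
        rw [hlabdef, lab1_inr hine] at h
        exact h
      rw [labD1] at h1
      by_cases h2 : ∃ j'', j'' ≠ j₀ ∧ X w' ∈ (K j'').verts
      · rw [dif_pos h2] at h1
        obtain ⟨hjc, hjcm⟩ := h2.choose_spec
        have hlabjc : lab (.inl h2.choose) = some (Sum.inl ⟨u, hu⟩) := by
          rw [hlabdef, lab1_inl hjc]
          exact h1
        have hrel : rel ⟨.inr w', hlabw'⟩ ⟨.inl h2.choose, hlabjc⟩ :=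
          ⟨X w', (hX w' hadjw).2, hjcm⟩
        obtain ⟨p⟩ := nbr_reach hDtree hine
        refine Relation.ReflTransGen.trans
          (rtg_of_walk (fun x h => (⟨.inr x, h⟩ : σ)) hcloseD hstepD p h hlabw') ?_
        exact Relation.ReflTransGen.head hrel (kclaim h2.choose hlabjc)
      · rw [dif_neg h2] at h1
        obtain ⟨h', heq⟩ := mkR_some h1
        exact absurd heq Sum.inl_ne_inr
  · -- lone branch piece
    have hwa : lab (.inr w) = some (Sum.inr ⟨w, hw⟩) := lab1_can_inr hDtree hw
    apply connected_iSup (fun aa : σ => P aa.1) hF ⟨.inr w, hwa⟩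
    rintro ⟨j | i, h⟩
    · exfalso
      have hjne : j ≠ j₀ := lab1_inl_ne h
      rw [hlabdef, lab1_inl hjne] at h
      obtain ⟨h', heq⟩ := mkI_some h
      simp at heq
    · have hine : i ≠ i₀ := lab1_inr_ne h
      have h1 : labD1 K D i₀ j₀ X (nbr (decompGraph D) i₀ i) = some (Sum.inr ⟨w, hw⟩) := by
        rw [hlabdef, lab1_inr hine] at h
        exact h
      rw [labD1] at h1
      by_cases h2 : ∃ j'', j'' ≠ j₀ ∧ X (nbr (decompGraph D) i₀ i) ∈ (K j'').verts
      · rw [dif_pos h2] at h1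
        obtain ⟨h', heq⟩ := mkI_some h1
        exact absurd heq Sum.inr_ne_inl
      · rw [dif_neg h2] at h1
        obtain ⟨h', heq⟩ := mkR_some h1
        have heq2 : w = nbr (decompGraph D) i₀ i := congrArg Subtype.val (Sum.inr_injective heq)
        have hreach := nbr_reach hDtree hine
        rw [← heq2] at hreach
        obtain ⟨p⟩ := hreach
        exact rtg_of_walk (fun x h => (⟨.inr x, h⟩ : σ)) hcloseD hstepD p h hwa

include hKtree hDtree hKle hKss hDss hX in
lemma case1_main
    (hKconn : ∀ j, (K j).Connected) (hDconn : ∀ i, (D i).Connected)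
    (hKe : ∀ j, (K j).edgeSet.Nonempty) (hDe : ∀ i, (D i).edgeSet.Nonempty)
    (hKed : ∀ j j', j ≠ j' → (K j).edgeSet ∩ (K j').edgeSet = ∅)
    (hDed : ∀ i i', i ≠ i' → (D i).edgeSet ∩ (D i').edgeSet = ∅)
    (hKv : (⋃ j, (K j).verts) = (D i₀).verts)
    (hKE : (⋃ j, (K j).edgeSet) = (D i₀).edgeSet)
    (hDv : (⋃ i, (D i).verts) = (⊤ : G.Subgraph).verts)
    (hDE : (⋃ i, (D i).edgeSet) = (⊤ : G.Subgraph).edgeSet)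
    (hk2 : 2 ≤ k) {v : V}
    (hvK : ∀ j, j ≠ j₀ → v ∉ (K j).verts) (hvD : ∀ i, i ≠ i₀ → v ∉ (D i).verts) :
    ∃ (m' : ℕ) (L : Fin m' → G.Subgraph),
      IsDecomposition G (Fin.cons (K j₀) L) ∧ ∀ t, v ∉ (L t).verts := by
  classical
  haveI : Nontrivial (Fin k) := Fin.nontrivial_iff_two_le.mpr hk2
  obtain ⟨jj, hjj⟩ := exists_ne j₀
  obtain ⟨b0, hb0⟩ := act_inl (X := X) (D := D) (i₀ := i₀) hKtree hjj
  haveI : Nonempty (Beta1 K D i₀ j₀ X) := ⟨b0⟩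
  set β := Beta1 K D i₀ j₀ X with hβ
  set lab := lab1 K D i₀ j₀ X with hlab
  set P := fineP K D with hPd
  set e : Fin (Fintype.card β) ≃ β := (Fintype.equivFin β).symm with he
  set L : Fin (Fintype.card β) → G.Subgraph := fun t => PartOf P lab (e t) with hLd
  have hcard : 1 ≤ Fintype.card β := Fintype.card_pos
  refine ⟨Fintype.card β, L, ?_, ?_⟩
  swap
  · -- v-freeness
    intro t hvmem
    rw [hLd] at hvmem
    obtain ⟨a, ha, hva⟩ := mem_PartOf_verts.mp hvmem
    obtain j | i := a
    · exact hvK j (lab1_inl_ne ha) hva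
    · exact hvD i (lab1_inr_ne ha) hva
  set Q : Fin (Fintype.card β + 1) → G.Subgraph := Fin.cons (K j₀) L with hQd
  have hQ0 : Q 0 = K j₀ := by rw [hQd]; exact Fin.cons_zero _ _
  have hQs : ∀ t, Q t.succ = PartOf P lab (e t) := fun t => by rw [hQd]; exact Fin.cons_succ _ _ _
  have hed0 : ∀ b, (K j₀).edgeSet ∩ (PartOf P lab b).edgeSet = ∅ := by
    intro b
    refine edge_inter_PartOf_left fun a ha => ?_
    obtain j | i := a
    · exact hKed j₀ j (Ne.symm (lab1_inl_ne ha))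
    · exact hKD_edge hKle hDed j₀ (lab1_inr_ne ha)
  have hedP : ∀ b b', b ≠ b' →
      (PartOf P lab b).edgeSet ∩ (PartOf P lab b').edgeSet = ∅ := by
    intro b b' hbb
    exact PartOf_edge_inter_empty fun a a' ha ha' =>
      lab1_edge_disj hKtree hDtree hKle hDss hX hKed hDed ha ha' hbb
  have hss0 : ∀ b, ((K j₀).verts ∩ (PartOf P lab b).verts).Subsingleton := by
    intro b
    have hsub := inter_PartOf_subset_left (P := P) (lab := lab) (b := b) (H := K j₀)
      (W := W1 K D i₀ j₀ X b)
      (fun a ha x hx0 hxa => inter_j0_subset hKtree hDtree hKle hDss hX ha hx0 hxa)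
    refine Set.Subsingleton.anti ?_ hsub
    obtain ⟨u, hu⟩ | ⟨w, hw⟩ := b
    · exact hKss j₀ u hu.1
    · exact hDss i₀ w hw.1.1
  have hssP : ∀ b b', b ≠ b' →
      ((PartOf P lab b).verts ∩ (PartOf P lab b').verts).Subsingleton := by
    intro b b' hbb
    have hsub : (PartOf P lab b).verts ∩ (PartOf P lab b').verts ⊆ (∅ : Set V) :=
      PartOf_inter_subset fun a a' ha ha' x hxa hxa' =>
        absurd (lab1_eq_of_inter hKtree hDtree hKle hDss hX ha ha' ⟨x, hxa, hxa'⟩) hbb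
    exact Set.subsingleton_empty.anti hsub
  have hcoverV : ∀ (x : V) a b, lab a = some b → x ∈ (P a).verts →
      ∃ idx, x ∈ (Q idx).verts := by
    intro x a b ha hx
    refine ⟨(e.symm b).succ, ?_⟩
    rw [hQs, Equiv.apply_symm_apply]
    exact mem_PartOf_verts.mpr ⟨a, ha, hx⟩
  have hcoverE : ∀ (ed : Sym2 V) a b, lab a = some b → ed ∈ (P a).edgeSet →
      ∃ idx, ed ∈ (Q idx).edgeSet := by
    intro ed a b ha hx
    refine ⟨(e.symm b).succ, ?_⟩
    rw [hQs, Equiv.apply_symm_apply]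
    exact mem_PartOf_edgeSet.mpr ⟨a, ha, hx⟩
  refine ⟨by omega, fun _ => le_top, ?_, ?_, ?_, ?_, ?_, ?_, ?_⟩
  · -- connectivity
    intro idx
    refine Fin.cases ?_ ?_ idx
    · rw [hQ0]
      exact hKconn j₀
    · intro t
      rw [hQs]
      exact Part1_connected hKtree hDtree hX hKconn hDconn (e t)
  · -- edges nonempty
    intro idx
    refine Fin.cases ?_ ?_ idx
    · rw [hQ0]
      exact hKe j₀
    · intro t
      rw [hQs]
      obtain ⟨a, ha⟩ := lab1_surj hKtree hDtree (e t)
      have hPa : (P a).edgeSet.Nonempty := by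
        obtain j | i := a
        exacts [hKe j, hDe i]
      obtain ⟨ed, hed⟩ := hPa
      exact ⟨ed, Subgraph.edgeSet_mono (le_PartOf ha) hed⟩
  · -- edge disjointness
    intro idx idx' hne
    rcases Fin.eq_zero_or_eq_succ idx with rfl | ⟨t, rfl⟩ <;>
      rcases Fin.eq_zero_or_eq_succ idx' with rfl | ⟨t', rfl⟩
    · exact absurd rfl hne
    · rw [hQ0, hQs]
      exact hed0 (e t')
    · rw [hQ0, hQs, Set.inter_comm]
      exact hed0 (e t)
    · rw [hQs, hQs]
      exact hedP _ _ fun hbb => hne (congrArg Fin.succ (e.injective hbb))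
  · -- vertex subsingletons
    intro idx idx' hne
    rcases Fin.eq_zero_or_eq_succ idx with rfl | ⟨t, rfl⟩ <;>
      rcases Fin.eq_zero_or_eq_succ idx' with rfl | ⟨t', rfl⟩
    · exact absurd rfl hne
    · rw [hQ0, hQs]
      exact hss0 (e t')
    · rw [hQ0, hQs, Set.inter_comm]
      exact hss0 (e t)
    · rw [hQs, hQs]
      exact hssP _ _ fun hbb => hne (congrArg Fin.succ (e.injective hbb))
  · -- vertex cover
    refine Set.Subset.antisymm (fun x _ => by rw [Subgraph.verts_top]; trivial) ?_
    intro x _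
    rw [Set.mem_iUnion]
    have hx : x ∈ ⋃ i, (D i).verts := by rw [hDv, Subgraph.verts_top]; trivial
    rw [Set.mem_iUnion] at hx
    obtain ⟨i, hi⟩ := hx
    by_cases hii : i = i₀
    · rw [hii] at hi
      have hx2 : x ∈ ⋃ j, (K j).verts := hKv ▸ hi
      rw [Set.mem_iUnion] at hx2
      obtain ⟨j, hj⟩ := hx2
      by_cases hjj : j = j₀
      · rw [hjj] at hj
        exact ⟨0, by rw [hQ0]; exact hj⟩
      · obtain ⟨b, hb⟩ := act_inl (X := X) (D := D) (i₀ := i₀) hKtree hjj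
        exact hcoverV x (.inl j) b hb hj
    · obtain ⟨b, hb⟩ := act_inr hKtree hDtree hii
      exact hcoverV x (.inr i) b hb hi
  · -- edge cover
    refine Set.Subset.antisymm ?_ ?_
    · intro ed hed
      rw [Set.mem_iUnion] at hed
      obtain ⟨idx, hidx⟩ := hed
      exact Subgraph.edgeSet_mono (le_top : Q idx ≤ ⊤) hidx
    · intro ed hed
      rw [Set.mem_iUnion]
      have hx : ed ∈ ⋃ i, (D i).edgeSet := by rw [hDE]; exact hed
      rw [Set.mem_iUnion] at hx
      obtain ⟨i, hi⟩ := hx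
      by_cases hii : i = i₀
      · rw [hii] at hi
        have hx2 : ed ∈ ⋃ j, (K j).edgeSet := hKE ▸ hi
        rw [Set.mem_iUnion] at hx2
        obtain ⟨j, hj⟩ := hx2
        by_cases hjj : j = j₀
        · rw [hjj] at hj
          exact ⟨0, by rw [hQ0]; exact hj⟩
        · obtain ⟨b, hb⟩ := act_inl (X := X) (D := D) (i₀ := i₀) hKtree hjj
          exact hcoverE ed (.inl j) b hb hj
      · obtain ⟨b, hb⟩ := act_inr hKtree hDtree hii
        exact hcoverE ed (.inr i) b hb hi
  · -- tree (a star with centre 0)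
    refine isTree_star (decompGraph Q) ?_
    intro idx idx'
    constructor
    · rintro ⟨hne, hnon⟩
      refine ⟨hne, ?_⟩
      by_contra hcon
      push_neg at hcon
      obtain ⟨h1, h2⟩ := hcon
      obtain ⟨t, rfl⟩ := (Fin.eq_zero_or_eq_succ idx).resolve_left h1
      obtain ⟨t', rfl⟩ := (Fin.eq_zero_or_eq_succ idx').resolve_left h2
      rw [hQs, hQs] at hnon
      obtain ⟨x, hx, hx'⟩ := hnon
      obtain ⟨a, ha, hxa⟩ := mem_PartOf_verts.mp hx
      obtain ⟨a', ha', hxa'⟩ := mem_PartOf_verts.mp hx'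
      have hbb := lab1_eq_of_inter hKtree hDtree hKle hDss hX ha ha' ⟨x, hxa, hxa'⟩
      exact hne (congrArg Fin.succ (e.injective hbb))
    · rintro ⟨hne, rfl | rfl⟩
      · obtain ⟨t', rfl⟩ := (Fin.eq_zero_or_eq_succ idx').resolve_left (Ne.symm hne)
        refine ⟨hne, ?_⟩
        rw [hQ0, hQs]
        exact inter_j0_nonempty hKtree hDtree hX hKv (e t')
      · obtain ⟨t, rfl⟩ := (Fin.eq_zero_or_eq_succ idx).resolve_left hne
        refine ⟨hne, ?_⟩
        rw [hQ0, hQs, Set.inter_comm]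
        exact inter_j0_nonempty hKtree hDtree hX hKv (e t)

end Facts

end Case1

section Case2

open Classical

variable {V : Type*} {G : SimpleGraph V} {m k : ℕ}
variable (K : Fin k → G.Subgraph) (D : Fin m → G.Subgraph)
  (i₀ : Fin m) (j₁ j₂ : Fin k) (X : Fin m → V)

noncomputable def side (j : Fin k) : Bool :=
  if j ≠ j₁ ∧ nbr (decompGraph K) j₁ j = j₂ then true else false

noncomputable def labD2 (w : Fin m) : Option Bool :=
  if h2 : ∃ j, X w ∈ (K j).verts then some (side K j₁ j₂ h2.choose) else none

noncomputable def lab2 : Fin k ⊕ Fin m → Option Bool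
  | .inl j => some (side K j₁ j₂ j)
  | .inr i => if i = i₀ then none else labD2 K j₁ j₂ X (nbr (decompGraph D) i₀ i)

variable {K D i₀ j₁ j₂ X}

lemma side_j1 : side K j₁ j₂ j₁ = false := by simp [side]

lemma side_true {j : Fin k} :
    side K j₁ j₂ j = true ↔ j ≠ j₁ ∧ nbr (decompGraph K) j₁ j = j₂ := by
  unfold side
  by_cases h : j ≠ j₁ ∧ nbr (decompGraph K) j₁ j = j₂ <;> simp [h]

lemma side_j2 (hKtree : (decompGraph K).IsTree) (hadj12 : (decompGraph K).Adj j₁ j₂) :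
    side K j₁ j₂ j₂ = true :=
  side_true.mpr ⟨hadj12.ne', nbr_adj_self hKtree hadj12⟩

lemma side_crux (hKtree : (decompGraph K).IsTree) {j j' : Fin k}
    (h : (decompGraph K).Adj j j') (hj : j ≠ j₁) (hj' : j' ≠ j₁) :
    side K j₁ j₂ j = side K j₁ j₂ j' := by
  unfold side
  rw [nbr_crux hKtree h hj hj']
  simp [hj, hj']

lemma lab2_inl {j : Fin k} : lab2 K D i₀ j₁ j₂ X (.inl j) = some (side K j₁ j₂ j) := rfl

lemma lab2_inr {i : Fin m} (hi : i ≠ i₀) :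
    lab2 K D i₀ j₁ j₂ X (.inr i) = labD2 K j₁ j₂ X (nbr (decompGraph D) i₀ i) := by
  simp [lab2, hi]

lemma lab2_inr_ne {i : Fin m} {s : Bool} (h : lab2 K D i₀ j₁ j₂ X (.inr i) = some s) :
    i ≠ i₀ := by
  intro hi
  rw [lab2, if_pos hi] at h
  exact absurd h (by simp)

section Facts2

variable (hKtree : (decompGraph K).IsTree) (hDtree : (decompGraph D).IsTree)
  (hKle : ∀ j, K j ≤ D i₀)
  (hKss : ∀ j j', j ≠ j' → ((K j).verts ∩ (K j').verts).Subsingleton)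
  (hDss : ∀ i i', i ≠ i' → ((D i).verts ∩ (D i').verts).Subsingleton)
  (hX : ∀ w, (decompGraph D).Adj i₀ w → X w ∈ (D i₀).verts ∩ (D w).verts)
  (hadj12 : (decompGraph K).Adj j₁ j₂) {v : V}
  (hv1 : v ∈ (K j₁).verts) (hv2 : v ∈ (K j₂).verts)
  (hvD : ∀ i, i ≠ i₀ → v ∉ (D i).verts)

include hKtree hKss hadj12 hv1 hv2 in
lemma side_sep {j j' : Fin k} (h : (decompGraph K).Adj j j')
    (hs : side K j₁ j₂ j ≠ side K j₁ j₂ j') :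
    ∀ x, x ∈ (K j).verts → x ∈ (K j').verts → x = v := by
  intro x hx hx'
  have hkey : ∀ (p q : Fin k), (decompGraph K).Adj p q → side K j₁ j₂ p = false →
      side K j₁ j₂ q = true → p = j₁ ∧ q = j₂ := by
    intro p q hpq hp hq
    by_cases hpj : p = j₁
    · subst hpj
      obtain ⟨hq1, hq2⟩ := side_true.mp hq
      rw [nbr_adj_self hKtree hpq] at hq2
      exact ⟨rfl, hq2⟩
    · by_cases hqj : q = j₁
      · rw [hqj, side_j1] at hq
        exact absurd hq (by simp)
      · rw [side_crux hKtree hpq hpj hqj, hq] at hp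
        exact absurd hp (by simp)
  have hvmem : ∀ y, y ∈ (K j₁).verts ∩ (K j₂).verts → y = v :=
    fun y hy => hKss j₁ j₂ hadj12.ne hy ⟨hv1, hv2⟩
  rcases Bool.eq_false_or_eq_true (side K j₁ j₂ j) with hsj | hsj
  · have hsj' : side K j₁ j₂ j' = false := by
      rcases Bool.eq_false_or_eq_true (side K j₁ j₂ j') with h' | h'
      · exact absurd (hsj.trans h'.symm) hs
      · exact h'
    obtain ⟨rfl, rfl⟩ := hkey j' j h.symm hsj' hsj
    exact hvmem x ⟨hx', hx⟩
  · have hsj' : side K j₁ j₂ j' = true := by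
      rcases Bool.eq_false_or_eq_true (side K j₁ j₂ j') with h' | h'
      · exact h'
      · exact absurd (hsj.trans h'.symm) hs
    obtain ⟨rfl, rfl⟩ := hkey j j' h hsj hsj'
    exact hvmem x ⟨hx, hx'⟩

include hKle hDss hX in
lemma branch_id2 {x : V} {j : Fin k} {i : Fin m} (hxK : x ∈ (K j).verts)
    (hxD : x ∈ (D i).verts) (hi : i ≠ i₀) :
    (decompGraph D).Adj i₀ i ∧ x = X i := by
  have hx0 : x ∈ (D i₀).verts := (hKle j).1 hxK
  have hadj : (decompGraph D).Adj i₀ i := ⟨Ne.symm hi, x, hx0, hxD⟩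
  exact ⟨hadj, hDss i₀ i (Ne.symm hi) ⟨hx0, hxD⟩ (hX i hadj)⟩

include hKtree hDtree hKss hKle hDss hX hadj12 hv1 hv2 in
lemma lab2_sep_mix {j : Fin k} {i : Fin m} {s s' : Bool}
    (ha : lab2 K D i₀ j₁ j₂ X (.inl j) = some s)
    (ha' : lab2 K D i₀ j₁ j₂ X (.inr i) = some s') (hss : s ≠ s') :
    ∀ x, x ∈ (K j).verts → x ∈ (D i).verts → x = v := by
  intro x hxK hxD
  have hi := lab2_inr_ne ha'
  obtain ⟨hadj, hxX⟩ := branch_id2 hKle hDss hX hxK hxD hi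
  rw [lab2_inr hi, nbr_adj_self hDtree hadj, labD2] at ha'
  have h2 : ∃ j', X i ∈ (K j').verts := ⟨j, hxX ▸ hxK⟩
  rw [dif_pos h2] at ha'
  have hs : s = side K j₁ j₂ j := by
    rw [lab2_inl] at ha
    exact (Option.some_injective _ ha).symm
  have hs' : s' = side K j₁ j₂ h2.choose := (Option.some_injective _ ha').symm
  by_cases hc : h2.choose = j
  · rw [hc] at hs'
    exact absurd (hs.trans hs'.symm) hss
  · have hadjK : (decompGraph K).Adj j h2.choose := ⟨Ne.symm hc, X i, hxX ▸ hxK, h2.choose_spec⟩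
    refine side_sep hKtree hKss hadj12 hv1 hv2 hadjK ?_ x hxK (hxX ▸ h2.choose_spec)
    rw [← hs, ← hs']
    exact hss

include hKtree hDtree hKss hKle hDss hX hadj12 hv1 hv2 in
lemma lab2_sep {a a' : Fin k ⊕ Fin m} {s s' : Bool}
    (ha : lab2 K D i₀ j₁ j₂ X a = some s) (ha' : lab2 K D i₀ j₁ j₂ X a' = some s')
    (hss : s ≠ s') : ∀ x, x ∈ (fineP K D a).verts → x ∈ (fineP K D a').verts → x = v := by
  obtain j | i := a <;> obtain j' | i' := a'
  · intro x hx hx'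
    by_cases hjj : j = j'
    · subst hjj
      exact absurd (Option.some_injective _ (ha.symm.trans ha')) hss
    · have hadj : (decompGraph K).Adj j j' := ⟨hjj, x, hx, hx'⟩
      have hsides : side K j₁ j₂ j ≠ side K j₁ j₂ j' := by
        rw [Option.some_injective _ ha, Option.some_injective _ ha']
        exact hss
      exact side_sep hKtree hKss hadj12 hv1 hv2 hadj hsides x hx hx'
  · exact lab2_sep_mix hKtree hDtree hKle hKss hDss hX hadj12 hv1 hv2 ha ha' hss
  · intro x hx hx'
    exact lab2_sep_mix hKtree hDtree hKle hKss hDss hX hadj12 hv1 hv2 ha' ha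
      (Ne.symm hss) x hx' hx
  · intro x hx hx'
    by_cases hii : i = i'
    · subst hii
      exact absurd (Option.some_injective _ (ha.symm.trans ha')) hss
    · exfalso
      have hi := lab2_inr_ne ha
      have hi' := lab2_inr_ne ha'
      have hadj : (decompGraph D).Adj i i' := ⟨hii, x, hx, hx'⟩
      rw [lab2_inr hi] at ha
      rw [lab2_inr hi', ← nbr_crux hDtree hadj hi hi'] at ha'
      exact hss (Option.some_injective _ (ha.symm.trans ha'))

include hDtree hKle hX in
lemma act2_inr (hKv : (⋃ j, (K j).verts) = (D i₀).verts) {i : Fin m} (hi : i ≠ i₀) :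
    ∃ s, lab2 K D i₀ j₁ j₂ X (.inr i) = some s := by
  rw [lab2_inr hi]
  have hadjw : (decompGraph D).Adj i₀ (nbr (decompGraph D) i₀ i) := nbr_adj hDtree hi
  have h2 : ∃ j, X (nbr (decompGraph D) i₀ i) ∈ (K j).verts := by
    have h1 : X (nbr (decompGraph D) i₀ i) ∈ ⋃ j, (K j).verts :=
      hKv ▸ (hX _ hadjw).1
    rwa [Set.mem_iUnion] at h1
  rw [labD2, dif_pos h2]
  exact ⟨_, rfl⟩

include hKtree hadj12 in
lemma reach_false {j : Fin k} (hs : side K j₁ j₂ j = false) :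
    (away (decompGraph K) j₂).Reachable j j₁ := by
  classical
  by_cases hj : j = j₁
  · subst hj
    exact Reachable.refl _
  · have hnot : nbr (decompGraph K) j₁ j ≠ j₂ := by
      intro hnbr
      have := side_true.mpr ⟨hj, hnbr⟩
      rw [this] at hs
      simp at hs
    obtain ⟨p⟩ := nbr_reach hKtree hj
    have hj2 : j₂ ∉ p.support := by
      intro hmem
      have hq : (away (decompGraph K) j₁).Reachable j j₂ := ⟨p.takeUntil j₂ hmem⟩
      have hcong := nbr_congr hKtree hq hadj12.ne'
      rw [nbr_adj_self hKtree hadj12] at hcong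
      exact hnot hcong
    have h1 : (away (decompGraph K) j₂).Reachable j (nbr (decompGraph K) j₁ j) :=
      away_swap p hj2
    exact h1.trans (Adj.reachable
      (away_adj.mpr ⟨(nbr_adj hKtree hj).symm, hnot, hadj12.ne⟩))

include hKtree hDtree hX hadj12 in
lemma Part2_connected (hKconn : ∀ j, (K j).Connected) (hDconn : ∀ i, (D i).Connected)
    (s : Bool) : (PartOf (fineP K D) (lab2 K D i₀ j₁ j₂ X) s).Connected := by
  classical
  set lab := lab2 K D i₀ j₁ j₂ X with hlabdef
  set P := fineP K D with hPdef
  set σ := {a : Fin k ⊕ Fin m // lab a = some s} with hσdef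
  set rel : σ → σ → Prop :=
    fun aa bb => ((P aa.1).verts ∩ (P bb.1).verts).Nonempty with hreldef
  have hF : ∀ aa : σ, (P aa.1).Connected := by
    rintro ⟨j | i, h⟩
    exacts [hKconn j, hDconn i]
  have hcloseD : ∀ ⦃x y : Fin m⦄, (away (decompGraph D) i₀).Adj x y →
      lab (.inr x) = some s → lab (.inr y) = some s := by
    intro x y hxy hx
    rw [hlabdef, lab2_inr hxy.2.2, ← nbr_crux hDtree hxy.1 hxy.2.1 hxy.2.2]
    rw [hlabdef, lab2_inr hxy.2.1] at hx
    exact hx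
  have hstepD : ∀ ⦃x y : Fin m⦄, (away (decompGraph D) i₀).Adj x y →
      ∀ (hx : lab (.inr x) = some s) (hy : lab (.inr y) = some s),
      rel ⟨.inr x, hx⟩ ⟨.inr y, hy⟩ := fun x y hxy _ _ => hxy.1.2
  -- a common claim builder given a K-side claim
  have main : ∀ (a₀ : σ) (ha₀ : ∃ j₀', a₀.1 = .inl j₀')
      (kclaim : ∀ (j : Fin k) (hj : lab (.inl j) = some s),
        Relation.ReflTransGen rel ⟨.inl j, hj⟩ a₀),
      (PartOf P lab s).Connected := by
    intro a₀ ha₀ kclaim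
    apply connected_iSup (fun aa : σ => P aa.1) hF a₀
    rintro ⟨j | i, h⟩
    · exact kclaim j h
    · have hi : i ≠ i₀ := lab2_inr_ne h
      have hadjw : (decompGraph D).Adj i₀ (nbr (decompGraph D) i₀ i) := nbr_adj hDtree hi
      set w' := nbr (decompGraph D) i₀ i with hw'def
      have hlabw' : lab (.inr w') = some s := by
        rw [hlabdef, lab2_inr hadjw.ne', nbr_adj_self hDtree hadjw]
        rw [hlabdef, lab2_inr hi] at h
        exact h
      have h1 : labD2 K j₁ j₂ X w' = some s := by
        rw [hlabdef, lab2_inr hi] at h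
        exact h
      rw [labD2] at h1
      by_cases h2 : ∃ j', X w' ∈ (K j').verts
      · rw [dif_pos h2] at h1
        have hlabjc : lab (.inl h2.choose) = some s := h1
        have hrel : rel ⟨.inr w', hlabw'⟩ ⟨.inl h2.choose, hlabjc⟩ :=
          ⟨X w', (hX w' hadjw).2, h2.choose_spec⟩
        obtain ⟨p⟩ := nbr_reach hDtree hi
        refine Relation.ReflTransGen.trans
          (rtg_of_walk (fun x h => (⟨.inr x, h⟩ : σ)) hcloseD hstepD p h hlabw') ?_
        exact Relation.ReflTransGen.head hrel (kclaim h2.choose hlabjc)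
      · rw [dif_neg h2] at h1
        exact absurd h1 (by simp)
  cases s with
  | true =>
      have hj2lab : lab (.inl j₂) = some true := by
        show some (side K j₁ j₂ j₂) = some true
        rw [side_j2 hKtree hadj12]
      refine main ⟨.inl j₂, hj2lab⟩ ⟨j₂, rfl⟩ ?_
      intro j hj
      have hside : side K j₁ j₂ j = true := Option.some_injective _ hj
      obtain ⟨hne, hnbr⟩ := side_true.mp hside
      have hcloseK : ∀ ⦃x y : Fin k⦄, (away (decompGraph K) j₁).Adj x y →
          lab (.inl x) = some true → lab (.inl y) = some true := by
        intro x y hxy hx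
        show some (side K j₁ j₂ y) = some true
        rw [← side_crux hKtree hxy.1 hxy.2.1 hxy.2.2]
        exact hx
      have hstepK : ∀ ⦃x y : Fin k⦄, (away (decompGraph K) j₁).Adj x y →
          ∀ (hx : lab (.inl x) = some true) (hy : lab (.inl y) = some true),
          rel ⟨.inl x, hx⟩ ⟨.inl y, hy⟩ := fun x y hxy _ _ => hxy.1.2
      have hreach := nbr_reach hKtree hne
      rw [hnbr] at hreach
      obtain ⟨p⟩ := hreach
      exact rtg_of_walk (fun x h => (⟨.inl x, h⟩ : σ)) hcloseK hstepK p hj hj2lab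
  | false =>
      have hj1lab : lab (.inl j₁) = some false := by
        show some (side K j₁ j₂ j₁) = some false
        rw [side_j1]
      refine main ⟨.inl j₁, hj1lab⟩ ⟨j₁, rfl⟩ ?_
      intro j hj
      have hside : side K j₁ j₂ j = false := Option.some_injective _ hj
      have hlabof : ∀ x : Fin k, (away (decompGraph K) j₂).Reachable x j₁ →
          lab (.inl x) = some false := by
        intro x hx
        show some (side K j₁ j₂ x) = some false
        rcases Bool.eq_false_or_eq_true (side K j₁ j₂ x) with h' | h'
        · exfalso
          obtain ⟨hxne, hxnbr⟩ := side_true.mp h'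
          have hr1 := nbr_reach hKtree hxne
          rw [hxnbr] at hr1
          exact not_both_sides hKtree hadj12 hr1 hx
        · rw [h']
      have hcloseF : ∀ ⦃x y : Fin k⦄, (away (decompGraph K) j₂).Adj x y →
          (away (decompGraph K) j₂).Reachable x j₁ →
          (away (decompGraph K) j₂).Reachable y j₁ :=
        fun x y hxy hx => (Adj.reachable hxy.symm).trans hx
      have hstepF : ∀ ⦃x y : Fin k⦄, (away (decompGraph K) j₂).Adj x y →
          ∀ (hx : (away (decompGraph K) j₂).Reachable x j₁)
            (hy : (away (decompGraph K) j₂).Reachable y j₁),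
          rel ⟨.inl x, hlabof x hx⟩ ⟨.inl y, hlabof y hy⟩ := fun x y hxy _ _ => hxy.1.2
      obtain ⟨p⟩ := reach_false hKtree hadj12 hside
      exact rtg_of_walk (fun x h => (⟨.inl x, hlabof x h⟩ : σ)) hcloseF hstepF p
        (reach_false hKtree hadj12 hside) (Reachable.refl _)

include hKtree hDtree hKle hKss hDss hX hadj12 hv1 hv2 in
lemma case2_main
    (hKconn : ∀ j, (K j).Connected) (hDconn : ∀ i, (D i).Connected)
    (hKe : ∀ j, (K j).edgeSet.Nonempty)
    (hKed : ∀ j j', j ≠ j' → (K j).edgeSet ∩ (K j').edgeSet = ∅)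
    (hDed : ∀ i i', i ≠ i' → (D i).edgeSet ∩ (D i').edgeSet = ∅)
    (hKv : (⋃ j, (K j).verts) = (D i₀).verts)
    (hKE : (⋃ j, (K j).edgeSet) = (D i₀).edgeSet)
    (hDv : (⋃ i, (D i).verts) = (⊤ : G.Subgraph).verts)
    (hDE : (⋃ i, (D i).edgeSet) = (⊤ : G.Subgraph).edgeSet) :
    ∃ L : Fin 2 → G.Subgraph, IsDecomposition G L ∧ ∀ t, v ∈ (L t).verts := by
  classical
  set lab := lab2 K D i₀ j₁ j₂ X with hlabdef
  set P := fineP K D with hPdef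
  set L : Fin 2 → G.Subgraph := ![PartOf P lab false, PartOf P lab true] with hLd
  have hL0 : L 0 = PartOf P lab false := rfl
  have hL1 : L 1 = PartOf P lab true := rfl
  have hlabj1 : lab (.inl j₁) = some false := by
    show some (side K j₁ j₂ j₁) = some false
    rw [side_j1]
  have hlabj2 : lab (.inl j₂) = some true := by
    show some (side K j₁ j₂ j₂) = some true
    rw [side_j2 hKtree hadj12]
  have hvfalse : v ∈ (PartOf P lab false).verts :=
    mem_PartOf_verts.mpr ⟨.inl j₁, hlabj1, hv1⟩
  have hvtrue : v ∈ (PartOf P lab true).verts :=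
    mem_PartOf_verts.mpr ⟨.inl j₂, hlabj2, hv2⟩
  have hvmem : ∀ t, v ∈ (L t).verts := by
    intro t
    fin_cases t
    exacts [hvfalse, hvtrue]
  have hedFT : ∀ s s' : Bool, s ≠ s' →
      (PartOf P lab s).edgeSet ∩ (PartOf P lab s').edgeSet = ∅ := by
    intro s s' hss
    refine PartOf_edge_inter_empty fun a a' ha ha' => ?_
    obtain j | i := a <;> obtain j' | i' := a'
    · refine hKed j j' fun hjj => hss ?_
      subst hjj
      exact Option.some_injective _ (ha.symm.trans ha')
    · exact hKD_edge hKle hDed j (lab2_inr_ne ha')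
    · rw [Set.inter_comm]
      exact hKD_edge hKle hDed j' (lab2_inr_ne ha)
    · refine hDed i i' fun hii => hss ?_
      subst hii
      exact Option.some_injective _ (ha.symm.trans ha')
  have hssFT : ∀ s s' : Bool, s ≠ s' →
      ((PartOf P lab s).verts ∩ (PartOf P lab s').verts).Subsingleton := by
    intro s s' hss
    have hsub : (PartOf P lab s).verts ∩ (PartOf P lab s').verts ⊆ {v} :=
      PartOf_inter_subset fun a a' ha ha' x hxa hxa' =>
        lab2_sep hKtree hDtree hKle hKss hDss hX hadj12 hv1 hv2 ha ha' hss x hxa hxa'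
    exact Set.subsingleton_singleton.anti hsub
  have hcovV : ∀ (x : V) a s, lab a = some s → x ∈ (P a).verts →
      ∃ t, x ∈ (L t).verts := by
    intro x a s ha hx
    cases s with
    | false => exact ⟨0, mem_PartOf_verts.mpr ⟨a, ha, hx⟩⟩
    | true => exact ⟨1, mem_PartOf_verts.mpr ⟨a, ha, hx⟩⟩
  have hcovE : ∀ (ed : Sym2 V) a s, lab a = some s → ed ∈ (P a).edgeSet →
      ∃ t, ed ∈ (L t).edgeSet := by
    intro ed a s ha hx
    cases s with
    | false => exact ⟨0, mem_PartOf_edgeSet.mpr ⟨a, ha, hx⟩⟩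
    | true => exact ⟨1, mem_PartOf_edgeSet.mpr ⟨a, ha, hx⟩⟩
  refine ⟨L, ⟨le_refl 2, fun _ => le_top, ?_, ?_, ?_, ?_, ?_, ?_, ?_⟩, hvmem⟩
  · intro t
    fin_cases t
    · exact Part2_connected hKtree hDtree hX hadj12 hKconn hDconn false
    · exact Part2_connected hKtree hDtree hX hadj12 hKconn hDconn true
  · intro t
    fin_cases t
    · obtain ⟨ed, hed⟩ := hKe j₁
      exact ⟨ed, Subgraph.edgeSet_mono (le_PartOf hlabj1) hed⟩
    · obtain ⟨ed, hed⟩ := hKe j₂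
      exact ⟨ed, Subgraph.edgeSet_mono (le_PartOf hlabj2) hed⟩
  · intro t t' hne
    fin_cases t <;> fin_cases t'
    · exact absurd rfl hne
    · exact hedFT false true (by simp)
    · exact hedFT true false (by simp)
    · exact absurd rfl hne
  · intro t t' hne
    fin_cases t <;> fin_cases t'
    · exact absurd rfl hne
    · exact hssFT false true (by simp)
    · exact hssFT true false (by simp)
    · exact absurd rfl hne
  · refine Set.Subset.antisymm (fun x _ => by rw [Subgraph.verts_top]; trivial) ?_
    intro x _
    rw [Set.mem_iUnion]
    have hx : x ∈ ⋃ i, (D i).verts := by rw [hDv, Subgraph.verts_top]; trivial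
    rw [Set.mem_iUnion] at hx
    obtain ⟨i, hi⟩ := hx
    by_cases hii : i = i₀
    · rw [hii] at hi
      have hx2 : x ∈ ⋃ j, (K j).verts := hKv ▸ hi
      rw [Set.mem_iUnion] at hx2
      obtain ⟨j, hj⟩ := hx2
      exact hcovV x (.inl j) (side K j₁ j₂ j) rfl hj
    · obtain ⟨s, hs⟩ := act2_inr hDtree hKle hX hKv hii
      exact hcovV x (.inr i) s hs hi
  · refine Set.Subset.antisymm ?_ ?_
    · intro ed hed
      rw [Set.mem_iUnion] at hed
      obtain ⟨t, ht⟩ := hed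
      exact Subgraph.edgeSet_mono (le_top : L t ≤ ⊤) ht
    · intro ed hed
      rw [Set.mem_iUnion]
      have hx : ed ∈ ⋃ i, (D i).edgeSet := by rw [hDE]; exact hed
      rw [Set.mem_iUnion] at hx
      obtain ⟨i, hi⟩ := hx
      by_cases hii : i = i₀
      · rw [hii] at hi
        have hx2 : ed ∈ ⋃ j, (K j).edgeSet := hKE ▸ hi
        rw [Set.mem_iUnion] at hx2
        obtain ⟨j, hj⟩ := hx2
        exact hcovE ed (.inl j) (side K j₁ j₂ j) rfl hj
      · obtain ⟨s, hs⟩ := act2_inr hDtree hKle hX hKv hii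
        exact hcovE ed (.inr i) s hs hi
  · refine isTree_two _ ?_
    exact ⟨by decide, v, hvfalse, hvtrue⟩

end Facts2

end Case2

end DecompRefine

/-- Lemma on refining decompositions: let `D` be a decomposition of a connected
non-atomic graph `G`, let `K` be a decomposition of the member `D i₀` (playing the role
of `G₁`), and let `v` be a vertex of `D i₀` belonging to no other member of `D`.
If `v` belongs to exactly one member `K j₀` of `K`, then `G` has a decomposition
`{K j₀, L 0, …, L (m'-1)}` with `v` in no `L i`; and if `v` belongs to two members of
`K`, then `G` has a decomposition into two subgraphs both containing `v`. -/
theorem decomposition_refine {V : Type*} [Fintype V] (G : SimpleGraph V)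
    (hconn : G.Connected) (hna : ¬ IsAtomicGraph G)
    {m : ℕ} (D : Fin m → G.Subgraph) (hD : IsDecomposition G D) (i₀ : Fin m)
    {k : ℕ} (K : Fin k → G.Subgraph) (hK : IsDecompositionOf (D i₀) K)
    (hk : 2 ≤ k) (v : V) (hv : v ∈ (D i₀).verts)
    (hvD : ∀ i : Fin m, i ≠ i₀ → v ∉ (D i).verts) :
    (∀ j₀ : Fin k, v ∈ (K j₀).verts → (∀ j, j ≠ j₀ → v ∉ (K j).verts) →
      ∃ (m' : ℕ) (L : Fin m' → G.Subgraph),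
        IsDecomposition G (Fin.cons (K j₀) L) ∧ ∀ i, v ∉ (L i).verts) ∧
    ((∃ j₁ j₂ : Fin k, j₁ ≠ j₂ ∧ v ∈ (K j₁).verts ∧ v ∈ (K j₂).verts) →
      ∃ L : Fin 2 → G.Subgraph, IsDecomposition G L ∧ ∀ i, v ∈ (L i).verts) := by
  classical
  obtain ⟨hm2, hDle, hDconn, hDe, hDed, hDss, hDv, hDE, hDtree⟩ := hD
  obtain ⟨hk2, hKle, hKconn, hKe, hKed, hKss, hKv, hKE, hKtree⟩ := hK
  obtain ⟨X, hX⟩ : ∃ X : Fin m → V,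
      ∀ w, (decompGraph D).Adj i₀ w → X w ∈ (D i₀).verts ∩ (D w).verts := by
    refine ⟨fun w => if h : (decompGraph D).Adj i₀ w then h.2.some else v, fun w h => ?_⟩
    dsimp only
    split_ifs
    exact h.2.some_mem
  constructor
  · intro j₀ hvj₀ hvK'
    exact DecompRefine.case1_main hKtree hDtree hKle hKss hDss hX hKconn hDconn hKe hDe
      hKed hDed hKv hKE hDv hDE hk hvK' hvD
  · rintro ⟨j₁, j₂, hne, hv1, hv2⟩
    have hadj12 : (decompGraph K).Adj j₁ j₂ := ⟨hne, v, hv1, hv2⟩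
    exact DecompRefine.case2_main hKtree hDtree hKle hKss hDss hX hadj12 hv1 hv2
      hKconn hDconn hKe hKed hDed hKv hKE hDv hDE
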